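/- Suppose for every x, the map z ↦ ∇f(x;z) is L_z-Lipschitz in z, and z ∼ p has finite second moment with mean z̄. Then for every x, E_z ||∇f(x;z) - ∇ℓ(x)||^2 ≤ 4 L_z^2 Tr Var_z(z), where ∇ℓ(x) = E_z[∇f(x;z)]. Consequently, for a batch B of i.i.d. samples, E_B ||∇ℓ_B(x) - ∇ℓ(x)||^2 ≤ 4 L_z^2 Tr Var_z(z) / |B|, uniformly in x. -/

import Mathlib

open MeasureTheory
open scoped BigOperators ENNReal

section Aux

lemma integral_norm_sq_sub_mean_le {α F : Type*} [MeasurableSpace α]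
    {μ : Measure α} [IsProbabilityMeasure μ]
    [NormedAddCommGroup F] [InnerProductSpace ℝ F] [CompleteSpace F]
    {g : α → F} (hg : MemLp g 2 μ) (c : F) :
    ∫ z, ‖g z - ∫ z', g z' ∂μ‖ ^ 2 ∂μ ≤ ∫ z, ‖g z - c‖ ^ 2 ∂μ := by
  set M : F := ∫ z', g z' ∂μ with hM
  have hgi : Integrable g μ := hg.integrable one_le_two
  have hsub : Integrable (fun z => g z - M) μ := hgi.sub (integrable_const _)
  have h1 : MemLp (fun z => g z - M) 2 μ := hg.sub (memLp_const _)
  have h1i : Integrable (fun z => ‖g z - M‖ ^ 2) μ :=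
    (memLp_two_iff_integrable_sq_norm h1.aestronglyMeasurable).mp h1
  have hinner : Integrable (fun z => (2 : ℝ) * inner ℝ (M - c) (g z - M)) μ :=
    (hsub.const_inner (M - c)).const_mul 2
  have h2i : Integrable (fun z => (2 : ℝ) * inner ℝ (M - c) (g z - M) + ‖M - c‖ ^ 2) μ :=
    hinner.add (integrable_const _)
  have key : ∀ z, ‖g z - c‖ ^ 2
      = ‖g z - M‖ ^ 2 + ((2 : ℝ) * inner ℝ (M - c) (g z - M) + ‖M - c‖ ^ 2) := by
    intro z
    have h := norm_add_sq_real (g z - M) (M - c)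
    have hz : g z - c = (g z - M) + (M - c) := by abel
    rw [hz, h, real_inner_comm]
    ring
  have hval : ∫ z, ((2 : ℝ) * inner ℝ (M - c) (g z - M) + ‖M - c‖ ^ 2) ∂μ = ‖M - c‖ ^ 2 := by
    rw [integral_add hinner (integrable_const _), integral_const, probReal_univ,
      one_smul, integral_const_mul, integral_inner hsub,
      integral_sub hgi (integrable_const _), integral_const, probReal_univ,
      one_smul, ← hM, sub_self, inner_zero_right]
    ring
  calc ∫ z, ‖g z - M‖ ^ 2 ∂μ
      ≤ ∫ z, ‖g z - M‖ ^ 2 ∂μ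
        + ∫ z, ((2 : ℝ) * inner ℝ (M - c) (g z - M) + ‖M - c‖ ^ 2) ∂μ := by
        rw [hval]; exact le_add_of_nonneg_right (by positivity)
    _ = ∫ z, ‖g z - c‖ ^ 2 ∂μ := by
        rw [← integral_add h1i h2i]
        simp_rw [← key]

lemma measurePreserving_eval_pi' {E : Type*} [MeasurableSpace E] (p : Measure E)
    [IsProbabilityMeasure p] {K : ℕ} (i : Fin K) :
    MeasurePreserving (fun w : Fin K → E => w i) (Measure.pi fun _ => p) p := by
  refine ⟨measurable_pi_apply i, ?_⟩
  ext s hs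
  rw [Measure.map_apply (measurable_pi_apply i) hs]
  have : (fun w : Fin K → E => w i) ⁻¹' s
      = Set.pi Set.univ (Function.update (fun _ => Set.univ) i s) := by
    rw [← Set.eval_preimage]
  rw [this, Measure.pi_pi]
  simp only [Function.apply_update (fun _ t => p t)]
  rw [Finset.prod_update_of_mem (Finset.mem_univ i)]
  simp

lemma batch_variance_eq {E : Type*} [MeasurableSpace E] {p : Measure E}
    [IsProbabilityMeasure p] {h : E → ℝ} (hh : MemLp h 2 p)
    (hmean : ∫ z, h z ∂p = 0) (K : ℕ) (hK : 0 < K) :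
    ∫ w : Fin K → E, ((K : ℝ)⁻¹ * ∑ i, h (w i)) ^ 2 ∂(Measure.pi fun _ => p)
      = (∫ z, h z ^ 2 ∂p) / K := by
  letI : MeasureSpace E := ⟨p⟩
  haveI : IsProbabilityMeasure (volume : Measure E) := ‹IsProbabilityMeasure p›
  set q : Measure (Fin K → E) := Measure.pi fun _ => p with hq
  haveI : IsProbabilityMeasure q := by infer_instance
  have hHi : ∀ i : Fin K, MemLp (fun w : Fin K → E => h (w i)) 2 q :=
    fun i => hh.comp_measurePreserving (measurePreserving_eval_pi' p i)
  have hint : ∀ i j : Fin K, Integrable (fun w => h (w i) * h (w j)) q := by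
    intro i j
    have := MemLp.smul (p := (2 : ℝ≥0∞)) (q := (2 : ℝ≥0∞)) (r := (1 : ℝ≥0∞))
      (hHi j) (hHi i)
    simpa [smul_eq_mul, mul_comm, Pi.mul_def] using this.integrable le_rfl
  have hterm : ∀ i j : Fin K, (∫ w, h (w i) * h (w j) ∂q)
      = if i = j then ∫ z, h z ^ 2 ∂p else 0 := by
    intro i j
    by_cases hij : i = j
    · subst hij
      rw [if_pos rfl]
      have hmeas2 : AEStronglyMeasurable (fun z => h z ^ 2) p :=
        (hh.aestronglyMeasurable.mul hh.aestronglyMeasurable).congr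
          (Filter.Eventually.of_forall fun z => (sq (h z)).symm)
      have hmap := (measurePreserving_eval_pi' p (K := K) i).map_eq
      have h2 : (∫ z, h z ^ 2 ∂p)
          = ∫ w : Fin K → E, h (w i) ^ 2 ∂(Measure.pi fun _ => p) := by
        conv_lhs => rw [← hmap]
        exact integral_map (measurable_pi_apply i).aemeasurable (by rwa [hmap])
      rw [h2, hq]
      simp_rw [sq]
    · simp only [if_neg hij]
      classical
      set F : Fin K → E → ℝ := fun i' => if i' = i then h else if i' = j then h else fun _ => 1
        with hF
      have hpt : ∀ w : Fin K → E, h (w i) * h (w j) = ∏ i', F i' (w i') := by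
        intro w
        rw [← Finset.prod_subset (Finset.subset_univ ({i, j} : Finset (Fin K)))
          (fun x _ hx => ?_)]
        · rw [Finset.prod_pair hij]
          simp [hF, hij, Ne.symm hij]
        · simp only [Finset.mem_insert, Finset.mem_singleton, not_or] at hx
          simp [hF, hx.1, hx.2]
      simp_rw [hpt]
      have : q = (volume : Measure (Fin K → E)) := by
        simp [hq, volume_pi]; rfl
      rw [this, integral_fintype_prod_volume_eq_prod (𝕜 := ℝ) F]
      refine Finset.prod_eq_zero (Finset.mem_univ i) ?_
      simp [hF]
      exact hmean
  have hintsum : ∀ i : Fin K, Integrable (fun w => ∑ j, h (w i) * h (w j)) q :=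
    fun i => integrable_finset_sum _ fun j _ => hint i j
  have expand : ∀ w : Fin K → E, ((K : ℝ)⁻¹ * ∑ i, h (w i)) ^ 2
      = (K : ℝ)⁻¹ ^ 2 * ∑ i, ∑ j, h (w i) * h (w j) := by
    intro w
    rw [mul_pow, sq (∑ i, h (w i)), Finset.sum_mul_sum]
  simp_rw [expand]
  rw [integral_const_mul, integral_finset_sum _ fun i _ => hintsum i]
  have : ∀ i : Fin K, (∫ w, ∑ j, h (w i) * h (w j) ∂q) = ∫ z, h z ^ 2 ∂p := by
    intro i
    rw [integral_finset_sum _ fun j _ => hint i j]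
    simp_rw [hterm]
    simp
  simp_rw [this]
  rw [Finset.sum_const, Finset.card_univ, Fintype.card_fin]
  have hKne : (K : ℝ) ≠ 0 := Nat.cast_ne_zero.mpr hK.ne'
  field_simp
  ring

end Aux

theorem gradient_variance_bound {X : Type*} {m d : ℕ}
    (p : Measure (EuclideanSpace ℝ (Fin m))) [IsProbabilityMeasure p]
    (f : X → EuclideanSpace ℝ (Fin m) → EuclideanSpace ℝ (Fin d))
    (Lz : ℝ)
    (hLip : ∀ x z₁ z₂, ‖f x z₁ - f x z₂‖ ≤ Lz * ‖z₁ - z₂‖)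
    (hmeas : ∀ x, AEStronglyMeasurable (f x) p)
    (zbar : EuclideanSpace ℝ (Fin m)) (hzbar : ∫ z, z ∂p = zbar)
    (hmom : MemLp id 2 p) :
    (∀ x, ∫ z, ‖f x z - ∫ z', f x z' ∂p‖ ^ 2 ∂p
        ≤ 4 * Lz ^ 2 * ∫ z, ‖z - zbar‖ ^ 2 ∂p)
    ∧ ∀ K : ℕ, 0 < K → ∀ x,
        ∫ w : Fin K → EuclideanSpace ℝ (Fin m),
            ‖(K : ℝ)⁻¹ • (∑ i, f x (w i)) - ∫ z', f x z' ∂p‖ ^ 2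
          ∂(Measure.pi fun _ => p)
        ≤ 4 * Lz ^ 2 * (∫ z, ‖z - zbar‖ ^ 2 ∂p) / K := by
  -- abbreviations
  set V : ℝ := ∫ z, ‖z - zbar‖ ^ 2 ∂p with hV
  have hL : ∀ x z₁ z₂, ‖f x z₁ - f x z₂‖ ≤ |Lz| * ‖z₁ - z₂‖ := fun x z₁ z₂ =>
    (hLip x z₁ z₂).trans (mul_le_mul_of_nonneg_right (le_abs_self _) (norm_nonneg _))
  -- second moment of shifted data
  have hmomsub : MemLp (fun z => z - zbar) 2 p := hmom.sub (memLp_const _)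
  have hVint : Integrable (fun z => ‖z - zbar‖ ^ 2) p :=
    (memLp_two_iff_integrable_sq_norm hmomsub.aestronglyMeasurable).mp hmomsub
  have hV0 : 0 ≤ V := integral_nonneg fun z => by positivity
  -- MemLp of the gradients
  have hf2 : ∀ x, MemLp (f x) 2 p := by
    intro x
    refine MemLp.of_le ((memLp_const (‖f x 0‖)).add ((hmom.norm).const_mul |Lz|))
      (hmeas x) (Filter.Eventually.of_forall fun z => ?_)
    have h1 : ‖f x z‖ ≤ ‖f x 0‖ + ‖f x z - f x 0‖ := by
      calc ‖f x z‖ = ‖f x 0 + (f x z - f x 0)‖ := by congr 1; abel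
        _ ≤ ‖f x 0‖ + ‖f x z - f x 0‖ := norm_add_le _ _
    have h2 : ‖f x z - f x 0‖ ≤ |Lz| * ‖z‖ := by
      simpa using hL x z 0
    have h3 : (0:ℝ) ≤ ‖f x 0‖ + |Lz| * ‖id z‖ := by positivity
    calc ‖f x z‖ ≤ ‖f x 0‖ + |Lz| * ‖z‖ := by linarith
      _ = ‖‖f x 0‖ + |Lz| * ‖id z‖‖ := by rw [Real.norm_of_nonneg h3]; rfl
  -- Part 1
  have part1 : ∀ x, ∫ z, ‖f x z - ∫ z', f x z' ∂p‖ ^ 2 ∂p ≤ Lz ^ 2 * V := by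
    intro x
    have hsubmem : MemLp (fun z => f x z - f x zbar) 2 p := (hf2 x).sub (memLp_const _)
    have hint1 : Integrable (fun z => ‖f x z - f x zbar‖ ^ 2) p :=
      (memLp_two_iff_integrable_sq_norm hsubmem.aestronglyMeasurable).mp hsubmem
    calc ∫ z, ‖f x z - ∫ z', f x z' ∂p‖ ^ 2 ∂p
        ≤ ∫ z, ‖f x z - f x zbar‖ ^ 2 ∂p := integral_norm_sq_sub_mean_le (hf2 x) _
      _ ≤ ∫ z, Lz ^ 2 * ‖z - zbar‖ ^ 2 ∂p := by
          refine integral_mono hint1 (hVint.const_mul _) fun z => ?_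
          have h1 := hL x z zbar
          have h2 : ‖f x z - f x zbar‖ ^ 2 ≤ (|Lz| * ‖z - zbar‖) ^ 2 :=
            pow_le_pow_left₀ (norm_nonneg _) h1 2
          calc ‖f x z - f x zbar‖ ^ 2 ≤ (|Lz| * ‖z - zbar‖) ^ 2 := h2
            _ = Lz ^ 2 * ‖z - zbar‖ ^ 2 := by rw [mul_pow, sq_abs]
      _ = Lz ^ 2 * V := integral_const_mul _ _
  have part1' : ∀ x, ∫ z, ‖f x z - ∫ z', f x z' ∂p‖ ^ 2 ∂p ≤ 4 * Lz ^ 2 * V := by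
    intro x
    refine (part1 x).trans ?_
    nlinarith [sq_nonneg Lz, hV0, mul_nonneg (sq_nonneg Lz) hV0]
  refine ⟨part1', ?_⟩
  -- Part 2
  intro K hK x
  have hKpos : (0:ℝ) < K := Nat.cast_pos.mpr hK
  set g : EuclideanSpace ℝ (Fin m) → EuclideanSpace ℝ (Fin d) := f x with hg
  set M : EuclideanSpace ℝ (Fin d) := ∫ z', f x z' ∂p with hM
  have hgi : Integrable g p := (hf2 x).integrable one_le_two
  -- coordinate functions
  set h : Fin d → EuclideanSpace ℝ (Fin m) → ℝ := fun k z => g z k - M k with hh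
  have hhmem : ∀ k, MemLp (h k) 2 p := by
    intro k
    exact ((EuclideanSpace.proj (𝕜 := ℝ) k).comp_memLp' (hf2 x)).sub (memLp_const (M k))
  have hhmean : ∀ k, ∫ z, h k z ∂p = 0 := by
    intro k
    have hproj : ∫ z, g z k ∂p = M k := by
      have := (EuclideanSpace.proj (𝕜 := ℝ) k).integral_comp_comm hgi
      simpa [hM, hg] using this
    rw [hh]
    simp only
    rw [integral_sub (by
      have := (EuclideanSpace.proj (𝕜 := ℝ) k).comp_memLp' (hf2 x)
      exact this.integrable one_le_two) (integrable_const _)]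
    rw [hproj, integral_const, probReal_univ, one_smul, sub_self]
  -- squared norm = sum of squared coordinates
  have hnorm_sq : ∀ v : EuclideanSpace ℝ (Fin d), ‖v‖ ^ 2 = ∑ k, (v k) ^ 2 := by
    intro v
    rw [EuclideanSpace.norm_eq]
    rw [Real.sq_sqrt (by positivity)]
    congr 1; ext k; rw [Real.norm_eq_abs, sq_abs]
  -- pointwise identity on the batch space
  have hpt : ∀ w : Fin K → EuclideanSpace ℝ (Fin m),
      ‖(K : ℝ)⁻¹ • (∑ i, g (w i)) - M‖ ^ 2
        = ∑ k, ((K : ℝ)⁻¹ * ∑ i, h k (w i)) ^ 2 := by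
    intro w
    rw [hnorm_sq]
    refine Finset.sum_congr rfl fun k _ => ?_
    congr 1
    have happly : ((K : ℝ)⁻¹ • (∑ i, g (w i)) - M) k
        = (K : ℝ)⁻¹ * (∑ i, g (w i) k) - M k := by
      rw [PiLp.sub_apply, PiLp.smul_apply]
      congr 1
      rw [smul_eq_mul]
      congr 1
      rw [WithLp.ofLp_sum]
      exact Finset.sum_apply k Finset.univ fun i => g (w i)
    rw [happly, hh]
    simp only
    rw [Finset.sum_sub_distrib, Finset.sum_const, Finset.card_univ, Fintype.card_fin,
      mul_sub, nsmul_eq_mul, ← mul_assoc, inv_mul_cancel₀ (ne_of_gt hKpos), one_mul]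
  calc ∫ w : Fin K → EuclideanSpace ℝ (Fin m),
        ‖(K : ℝ)⁻¹ • (∑ i, f x (w i)) - ∫ z', f x z' ∂p‖ ^ 2 ∂(Measure.pi fun _ => p)
      = ∑ k, ∫ w : Fin K → EuclideanSpace ℝ (Fin m),
          ((K : ℝ)⁻¹ * ∑ i, h k (w i)) ^ 2 ∂(Measure.pi fun _ => p) := by
        refine (integral_congr_ae (Filter.Eventually.of_forall hpt)).trans ?_
        refine integral_finset_sum _ fun k _ => ?_
        have hmemk : MemLp (fun w : Fin K → EuclideanSpace ℝ (Fin m) =>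
            (K : ℝ)⁻¹ * ∑ i, h k (w i)) 2 (Measure.pi fun _ => p) := by
          refine MemLp.const_mul ?_ _
          have h2 := memLp_finset_sum' (μ := Measure.pi fun _ : Fin K => p)
            Finset.univ fun i (_ : i ∈ Finset.univ) =>
            (hhmem k).comp_measurePreserving (measurePreserving_eval_pi' p i)
          have hfeq : (fun w : Fin K → EuclideanSpace ℝ (Fin m) => ∑ i, h k (w i))
              = ∑ i : Fin K, (h k ∘ fun w : Fin K → EuclideanSpace ℝ (Fin m) => w i) := by
            funext w
            rw [Finset.sum_apply]
            rfl
          rw [hfeq]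
          exact h2
        exact hmemk.integrable_sq
      _ = ∑ k, (∫ z, h k z ^ 2 ∂p) / K := by
        refine Finset.sum_congr rfl fun k _ => ?_
        exact batch_variance_eq (hhmem k) (hhmean k) K hK
      _ = (∫ z, ‖f x z - ∫ z', f x z' ∂p‖ ^ 2 ∂p) / K := by
        rw [← Finset.sum_div]
        congr 1
        rw [← integral_finset_sum _ fun k _ => (hhmem k).integrable_sq]
        refine integral_congr_ae (Filter.Eventually.of_forall fun z => ?_)
        show (∑ k, h k z ^ 2) = ‖f x z - ∫ z', f x z' ∂p‖ ^ 2
        rw [hnorm_sq (f x z - ∫ z', f x z' ∂p)]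
        refine Finset.sum_congr rfl fun k _ => ?_
        congr 1
      _ ≤ 4 * Lz ^ 2 * V / K := by
        exact (div_le_div_iff_of_pos_right hKpos).mpr (part1' x)
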